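/- Convergence of projected gradient residual: let Q ⪰ 0, q(x) = xᵀQx + cᵀx bounded below on {x ≥ 0}, and let {x^k} be a sequence of non-negative points such that q(x^{k+1}) ≤ q(x^k) − (1/(2ε))‖x̃^k − x^k‖² − σ₁‖g(x̃^k)_{N^k}‖² for all k, where x̃^k agrees with x^k on N^k and is zero on its complement A^k, and g_i(x^k) ≥ 0 for all i ∈ A^k. Then ‖max{0, −g(x^k)}‖ → 0 as k → ∞. -/

import Mathlib

open Matrix Finset Filter

/-- Convergence of the projected gradient residual for a sequence with the
sufficient-decrease property of FAST-QPA. -/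
theorem stmt_19 {n : ℕ} (Q : Matrix (Fin n) (Fin n) ℝ) (hQ : Q.PosSemidef)
    (c : Fin n → ℝ)
    (q : (Fin n → ℝ) → ℝ) (hq : ∀ x, q x = x ⬝ᵥ (Q *ᵥ x) + c ⬝ᵥ x)
    (g : (Fin n → ℝ) → (Fin n → ℝ)) (hg : ∀ x, g x = (2 : ℝ) • (Q *ᵥ x) + c)
    (hbdd : ∃ B : ℝ, ∀ x : Fin n → ℝ, (∀ i, 0 ≤ x i) → B ≤ q x)
    (ε σ₁ : ℝ) (hε : 0 < ε) (hσ₁ : 0 < σ₁)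
    (x xt : ℕ → Fin n → ℝ) (A : ℕ → Finset (Fin n))
    (hxnn : ∀ k i, 0 ≤ x k i)
    (hxt : ∀ k i, xt k i = if i ∈ A k then 0 else x k i)
    (hgA : ∀ k, ∀ i ∈ A k, 0 ≤ g (x k) i)
    (hdec : ∀ k, q (x (k + 1)) ≤ q (x k) - (1 / (2 * ε)) * (∑ i, (xt k i - x k i) ^ 2)
      - σ₁ * ∑ i ∈ (A k)ᶜ, (g (xt k) i) ^ 2) :
    Tendsto (fun k => Real.sqrt (∑ i, max 0 (-(g (x k) i)) ^ 2)) atTop (nhds 0) := by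
  obtain ⟨B, hB⟩ := hbdd
  set S1 : ℕ → ℝ := fun k => ∑ i, (xt k i - x k i) ^ 2 with hS1
  set S2 : ℕ → ℝ := fun k => ∑ i ∈ (A k)ᶜ, (g (xt k) i) ^ 2 with hS2
  have hS1nn : ∀ k, 0 ≤ S1 k := fun k => Finset.sum_nonneg fun i _ => sq_nonneg _
  have hS2nn : ∀ k, 0 ≤ S2 k := fun k => Finset.sum_nonneg fun i _ => sq_nonneg _
  have hc1 : (0 : ℝ) < 1 / (2 * ε) := by positivity
  set r : ℕ → ℝ := fun k => (1 / (2 * ε)) * S1 k + σ₁ * S2 k with hr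
  have hrnn : ∀ k, 0 ≤ r k := fun k =>
    add_nonneg (mul_nonneg hc1.le (hS1nn k)) (mul_nonneg hσ₁.le (hS2nn k))
  have hrle : ∀ k, r k ≤ q (x k) - q (x (k + 1)) := by
    intro k
    have := hdec k
    simp only [hr, hS1, hS2]
    linarith
  have hsum : ∀ N, ∑ k ∈ Finset.range N, r k ≤ q (x 0) - B := by
    intro N
    calc ∑ k ∈ Finset.range N, r k
        ≤ ∑ k ∈ Finset.range N, (q (x k) - q (x (k + 1))) :=
          Finset.sum_le_sum fun k _ => hrle k
      _ = q (x 0) - q (x N) := Finset.sum_range_sub' (fun k => q (x k)) N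
      _ ≤ q (x 0) - B := by linarith [hB (x N) (hxnn N)]
  have hsummable : Summable r := summable_of_sum_range_le hrnn hsum
  have hr0 : Tendsto r atTop (nhds 0) := hsummable.tendsto_atTop_zero
  have hS1_0 : Tendsto S1 atTop (nhds 0) := by
    have hle : ∀ k, S1 k ≤ (2 * ε) * r k := by
      intro k
      have h1 : (1 / (2 * ε)) * S1 k ≤ r k := by
        have := mul_nonneg hσ₁.le (hS2nn k); simp only [hr]; linarith
      have h2 := mul_le_mul_of_nonneg_left h1 (by positivity : (0:ℝ) ≤ 2 * ε)
      have hne : (2 * ε) ≠ 0 := by positivity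
      calc S1 k = (2 * ε) * ((1 / (2 * ε)) * S1 k) := by field_simp
        _ ≤ (2 * ε) * r k := h2
    have h := hr0.const_mul (2 * ε)
    rw [mul_zero] at h
    exact squeeze_zero hS1nn hle h
  have hS2_0 : Tendsto S2 atTop (nhds 0) := by
    have hle : ∀ k, S2 k ≤ σ₁⁻¹ * r k := by
      intro k
      have h1 : σ₁ * S2 k ≤ r k := by
        have := mul_nonneg hc1.le (hS1nn k); simp only [hr]; linarith
      have h2 := mul_le_mul_of_nonneg_left h1 (by positivity : (0:ℝ) ≤ σ₁⁻¹)
      have hne : σ₁ ≠ 0 := ne_of_gt hσ₁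
      calc S2 k = σ₁⁻¹ * (σ₁ * S2 k) := by field_simp
        _ ≤ σ₁⁻¹ * r k := h2
    have h := hr0.const_mul σ₁⁻¹
    rw [mul_zero] at h
    exact squeeze_zero hS2nn hle h
  -- Lipschitz-type bound for g
  set C : ℝ := ∑ i, ∑ j, (Q i j) ^ 2 with hC
  set T : ℕ → ℝ := fun k => ∑ i, max 0 (-(g (x k) i)) ^ 2 with hT
  have hTnn : ∀ k, 0 ≤ T k := fun k => Finset.sum_nonneg fun i _ => sq_nonneg _
  have hd : ∀ k i, g (x k) i - g (xt k) i = 2 * ∑ j, Q i j * (x k j - xt k j) := by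
    intro k i
    simp only [hg, Pi.add_apply, Pi.smul_apply, smul_eq_mul, Matrix.mulVec, dotProduct,
      Finset.mul_sum]
    have h1 : (∑ j, 2 * (Q i j * x k j)) - (∑ j, 2 * (Q i j * xt k j))
        = ∑ j, 2 * (Q i j * (x k j - xt k j)) := by
      rw [← Finset.sum_sub_distrib]; congr 1; ext j; ring
    linarith [h1]
  have hdsq : ∀ k, ∑ i, (g (x k) i - g (xt k) i) ^ 2 ≤ 4 * C * S1 k := by
    intro k
    have : ∀ i : Fin n, (g (x k) i - g (xt k) i) ^ 2 ≤ 4 * ((∑ j, (Q i j) ^ 2) * S1 k) := by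
      intro i
      rw [hd k i, mul_pow]
      have := Finset.sum_mul_sq_le_sq_mul_sq Finset.univ (fun j => Q i j)
        (fun j => x k j - xt k j)
      have heq : ∑ j, (x k j - xt k j) ^ 2 = S1 k := by
        simp only [hS1]; congr 1; ext j; ring
      rw [heq] at this
      nlinarith
    calc ∑ i, (g (x k) i - g (xt k) i) ^ 2
        ≤ ∑ i : Fin n, 4 * ((∑ j, (Q i j) ^ 2) * S1 k) :=
          Finset.sum_le_sum fun i _ => this i
      _ = 4 * C * S1 k := by rw [hC, ← Finset.mul_sum, ← Finset.sum_mul]; ring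
  have hTle : ∀ k, T k ≤ 2 * S2 k + 8 * C * S1 k := by
    intro k
    have hsplit : T k = ∑ i ∈ A k, max 0 (-(g (x k) i)) ^ 2
        + ∑ i ∈ (A k)ᶜ, max 0 (-(g (x k) i)) ^ 2 := by
      rw [hT]; exact (Finset.sum_add_sum_compl (A k) _).symm
    have hA0 : ∑ i ∈ A k, max 0 (-(g (x k) i)) ^ 2 = 0 := by
      apply Finset.sum_eq_zero
      intro i hi
      have : max 0 (-(g (x k) i)) = 0 := max_eq_left (by linarith [hgA k i hi])
      rw [this]; ring
    have hcompl : ∑ i ∈ (A k)ᶜ, max 0 (-(g (x k) i)) ^ 2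
        ≤ ∑ i ∈ (A k)ᶜ, (2 * (g (xt k) i) ^ 2 + 2 * (g (x k) i - g (xt k) i) ^ 2) := by
      apply Finset.sum_le_sum
      intro i _
      have h1 : max 0 (-(g (x k) i)) ^ 2 ≤ (g (x k) i) ^ 2 := by
        rcases le_or_gt (g (x k) i) 0 with h | h
        · rw [max_eq_right (by linarith)]; nlinarith
        · rw [max_eq_left (by linarith)]; nlinarith
      nlinarith [sq_nonneg (g (xt k) i - (g (x k) i - g (xt k) i))]
    have hcompl2 : ∑ i ∈ (A k)ᶜ, (2 * (g (xt k) i) ^ 2 + 2 * (g (x k) i - g (xt k) i) ^ 2)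
        ≤ 2 * S2 k + 2 * ∑ i, (g (x k) i - g (xt k) i) ^ 2 := by
      rw [Finset.sum_add_distrib, ← Finset.mul_sum, ← Finset.mul_sum]
      have h2 : ∑ i ∈ (A k)ᶜ, (g (x k) i - g (xt k) i) ^ 2
          ≤ ∑ i, (g (x k) i - g (xt k) i) ^ 2 :=
        Finset.sum_le_sum_of_subset_of_nonneg (Finset.subset_univ _)
          (fun i _ _ => sq_nonneg _)
      simp only [hS2]
      linarith
    have := hdsq k
    calc T k = 0 + ∑ i ∈ (A k)ᶜ, max 0 (-(g (x k) i)) ^ 2 := by rw [hsplit, hA0]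
      _ ≤ 2 * S2 k + 2 * ∑ i, (g (x k) i - g (xt k) i) ^ 2 := by
          rw [zero_add]; exact le_trans hcompl hcompl2
      _ ≤ 2 * S2 k + 8 * C * S1 k := by linarith
  have hbound0 : Tendsto (fun k => 2 * S2 k + 8 * C * S1 k) atTop (nhds 0) := by
    have h1 := hS2_0.const_mul 2
    have h2 := hS1_0.const_mul (8 * C)
    simpa using h1.add h2
  have hT0 : Tendsto T atTop (nhds 0) := squeeze_zero hTnn hTle hbound0
  have := (Real.continuous_sqrt.tendsto 0).comp hT0
  rw [Real.sqrt_zero] at this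
  exact this
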